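/- Let R₁ > 1 and let h be a real-valued function, continuous on the closed annulus {1/R₁ ≤ |z| ≤ R₁} and harmonic on 𝒜_{R₁}, satisfying the reflection symmetry h(z) = h(1/z̄) for all z in the closed annulus. Then for every k ∈ ℤ \ {0}: | ∫₀¹ h(e^{2πiθ})·e^{−2πikθ} dθ | ≤ 2·M·R₁^{−|k|}, where M = sup_{|z|=R₁} |h(z)|. -/

import Mathlib

open MeasureTheory Filter

noncomputable section

/-- Distance from `x` to the nearest integer. -/
def distZ (x : ℝ) : ℝ := |x - round x|

/-- One-step transfer matrix. -/
def oneStep (v : ℂ → ℂ) (E : ℂ) (z : ℂ) : Matrix (Fin 2) (Fin 2) ℂ :=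
  !![E - v z, -1; 1, 0]

/-- `m`-step transfer matrix. -/
def transfer (v : ℂ → ℂ) (ω : ℝ) (E : ℂ) : ℕ → ℂ → Matrix (Fin 2) (Fin 2) ℂ
  | 0, _ => 1
  | m + 1, z => transfer v ω E m (z + (ω : ℂ)) * oneStep v E z

/-- Operator (`ℓ²`) norm of a 2×2 complex matrix. -/
def opNorm2 (A : Matrix (Fin 2) (Fin 2) ℂ) : ℝ :=
  ‖Matrix.toEuclideanCLM (𝕜 := ℂ) A‖

/-- `u_{m,E}` at a (complexified) phase. -/
def uFun (v : ℂ → ℂ) (ω : ℝ) (E : ℂ) (m : ℕ) (z : ℂ) : ℝ :=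
  (1 / (m : ℝ)) * Real.log (opNorm2 (transfer v ω E m z))

/-- Finite-scale Lyapunov exponent `L_m(ω,E,ε)`. -/
def LyapFS (v : ℂ → ℂ) (ω : ℝ) (E : ℂ) (m : ℕ) (ε : ℝ) : ℝ :=
  ∫ θ in (0:ℝ)..1, uFun v ω E m ((θ : ℂ) + (ε : ℂ) * Complex.I)

/-- Lyapunov exponent `L(ω,E,ε)` (limit of `L_m`, realized as a `limsup`). -/
def Lyap (v : ℂ → ℂ) (ω : ℝ) (E : ℂ) (ε : ℝ) : ℝ :=
  limsup (fun m : ℕ => LyapFS v ω E m ε) atTop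

/-- Avila's acceleration `κ(ω,E)` (right derivative at `ε = 0`, realized as a limsup). -/
def accel (v : ℂ → ℂ) (ω : ℝ) (E : ℂ) : ℝ :=
  limsup (fun ε : ℝ => (Lyap v ω E ε - Lyap v ω E 0) / (2 * Real.pi * ε))
    (nhdsWithin 0 (Set.Ioi 0))

/-- Gauss map. -/
def gaussMap (x : ℝ) : ℝ := Int.fract x⁻¹

/-- Partial quotients of the continued fraction of `ω`; `cfA ω n = aₙ` for `n ≥ 1`. -/
def cfA (ω : ℝ) (n : ℕ) : ℕ := ⌊(gaussMap^[n - 1] ω)⁻¹⌋₊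

/-- Denominators of the continued fraction approximants of `ω`. -/
def cfQ (ω : ℝ) : ℕ → ℕ
  | 0 => 1
  | 1 => cfA ω 1
  | n + 2 => cfA ω (n + 2) * cfQ ω (n + 1) + cfQ ω n

/-- `β(ω) = limsup (log q_{n+1})/q_n`, as an extended real. -/
def betaE (ω : ℝ) : EReal :=
  limsup (fun n : ℕ => ((Real.log (cfQ ω (n + 1)) / (cfQ ω n : ℝ) : ℝ) : EReal)) atTop

/-- Real value of `β(ω)`. -/
def betaR (ω : ℝ) : ℝ := (betaE ω).toReal

/-- `k`-th Fourier coefficient of a function on `𝕋 = ℝ/ℤ`. -/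
def fourierCoeff01 (g : ℝ → ℂ) (k : ℤ) : ℂ :=
  ∫ θ in (0:ℝ)..1, g θ * Complex.exp (-2 * Real.pi * Complex.I * (k : ℂ) * (θ : ℂ))

/-- `k`-th Fourier coefficient of `u_{m,E}`. -/
def uhat (v : ℂ → ℂ) (ω : ℝ) (E : ℂ) (m : ℕ) (k : ℤ) : ℂ :=
  fourierCoeff01 (fun θ : ℝ => ((uFun v ω E m (θ : ℂ) : ℝ) : ℂ)) k

/-- Fejér kernel along `ω`. -/
def fejer (ω : ℝ) (Q : ℕ) (k : ℤ) : ℂ :=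
  ∑ j ∈ Finset.Ioo (-(Q : ℤ)) (Q : ℤ),
    ((((Q : ℝ) - |(j : ℝ)|) / (Q : ℝ) ^ 2 : ℝ) : ℂ) *
      Complex.exp (2 * Real.pi * Complex.I * (k : ℂ) * (j : ℂ) * (ω : ℂ))

/-- Open annulus `𝒜_R`. -/
def annulus (R : ℝ) : Set ℂ := {z : ℂ | 1 / R < ‖z‖ ∧ ‖z‖ < R}

/-- Closed annulus. -/
def closedAnnulus (R : ℝ) : Set ℂ := {z : ℂ | 1 / R ≤ ‖z‖ ∧ ‖z‖ ≤ R}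

/-- Regular part `Γ_R` of the Green's function of the annulus `𝒜_R`. -/
def GammaR (R : ℝ) (z w : ℂ) : ℝ :=
  Real.log (‖z‖ / R) * Real.log (‖w‖ / R) / (4 * Real.pi * Real.log R)
    + (1 / (2 * Real.pi)) * Real.log
      ((∏' k : ℕ, (‖1 - (R : ℂ) ^ (-(4 * ((k : ℤ) + 1))) * z / w‖
          * ‖1 - (R : ℂ) ^ (-(4 * ((k : ℤ) + 1))) * w / z‖))
        / (R * ∏' k : ℕ, (‖1 - (R : ℂ) ^ (-(4 * ((k : ℤ) + 1) - 2)) * w * (starRingEnd ℂ) z‖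
          * ‖1 - (R : ℂ) ^ (-(4 * ((k : ℤ) + 1) - 2)) / ((starRingEnd ℂ) z * w)‖)))

/-- Green's function `G_R` of the annulus `𝒜_R`. -/
def greenR (R : ℝ) (z w : ℂ) : ℝ :=
  (1 / (2 * Real.pi)) * Real.log (‖z - w‖) + GammaR R z w

/-- Second directional derivative of `f : ℂ → ℝ` at `z` in direction `v`. -/
def secondDirDeriv (f : ℂ → ℝ) (v z : ℂ) : ℝ :=
  deriv (deriv (fun t : ℝ => f (z + t • v))) 0

/-- Harmonicity of `f` on a set `S ⊆ ℂ`. -/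
def HarmonicOnSet (f : ℂ → ℝ) (S : Set ℂ) : Prop :=
  ContDiffOn ℝ 2 f S ∧ ∀ z ∈ S, secondDirDeriv f 1 z + secondDirDeriv f Complex.I z = 0

section AuxFourierDecay
open intervalIntegral Set Complex

-- complex gradient function
def gfun (h : ℂ → ℝ) (z : ℂ) : ℂ :=
  ((fderiv ℝ h z 1 : ℝ) : ℂ) - Complex.I * ((fderiv ℝ h z Complex.I : ℝ) : ℂ)

lemma isOpen_annulus (R : ℝ) : IsOpen (annulus R) := by
  have : annulus R = {z : ℂ | 1 / R < ‖z‖} ∩ {z : ℂ | ‖z‖ < R} := rfl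
  rw [this]
  exact (isOpen_lt continuous_const continuous_norm).inter
    (isOpen_lt continuous_norm continuous_const)

-- fderiv applied = real part of gfun * w
lemma fderiv_apply_eq (h : ℂ → ℝ) (z w : ℂ) :
    fderiv ℝ h z w = (gfun h z * w).re := by
  have hw : w = w.re • (1:ℂ) + w.im • Complex.I := by
    simp [Complex.real_smul, Complex.re_add_im]
  calc fderiv ℝ h z w = fderiv ℝ h z (w.re • (1:ℂ) + w.im • Complex.I) := by rw [← hw]
    _ = w.re • fderiv ℝ h z 1 + w.im • fderiv ℝ h z Complex.I := by
        rw [map_add, ContinuousLinearMap.map_smul, ContinuousLinearMap.map_smul]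
    _ = (gfun h z * w).re := by
        simp [gfun, Complex.mul_re, Complex.sub_re, Complex.sub_im, smul_eq_mul]
        ring

-- second directional derivative equals iterated fderiv
lemma secondDirDeriv_eq (f : ℂ → ℝ) (s : Set ℂ) (hs : IsOpen s)
    (hf : ContDiffOn ℝ 2 f s) {z : ℂ} (hz : z ∈ s) (v : ℂ) :
    secondDirDeriv f v z = fderiv ℝ (fderiv ℝ f) z v v := by
  set c : ℝ → ℂ := fun t => z + t • v with hc
  have hccont : Continuous c := by
    exact continuous_const.add (continuous_id.smul continuous_const)
  have hU : IsOpen (c ⁻¹' s) := hs.preimage hccont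
  have h0 : (0:ℝ) ∈ c ⁻¹' s := by simp [hc, hz]
  have hc0 : c 0 = z := by simp [hc]
  have hder : ∀ t : ℝ, HasDerivAt c v t := fun t => by
    simpa [hc] using ((hasDerivAt_id t).smul_const v).const_add z
  have hdiff : ∀ w ∈ s, DifferentiableAt ℝ f w := fun w hw =>
    (hf.contDiffAt (hs.mem_nhds hw)).differentiableAt two_ne_zero
  have hinner : (deriv fun t : ℝ => f (z + t • v)) =ᶠ[nhds 0] fun t => fderiv ℝ f (c t) v := by
    filter_upwards [hU.mem_nhds h0] with t ht
    have h1 : HasDerivAt (fun t : ℝ => f (z + t • v)) (fderiv ℝ f (c t) v) t := by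
      simpa [hc, Function.comp_def] using
        ((hdiff _ ht).hasFDerivAt.comp_hasDerivAt t (hder t))
    exact h1.deriv
  have hf' : HasFDerivAt (fderiv ℝ f) (fderiv ℝ (fderiv ℝ f) z) (c 0) := by
    rw [hc0]
    have h4 := (hf.contDiffAt (hs.mem_nhds hz)).fderiv_right (m := 1) le_rfl
    exact (h4.differentiableAt one_ne_zero).hasFDerivAt
  have h3 : HasDerivAt (fun t => fderiv ℝ f (c t)) (fderiv ℝ (fderiv ℝ f) z v) 0 := by
    simpa [Function.comp_def] using hf'.comp_hasDerivAt 0 (hder 0)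
  have h2 : HasDerivAt (fun t => fderiv ℝ f (c t) v) ((fderiv ℝ (fderiv ℝ f) z) v v) 0 := by
    simpa [Function.comp_def] using
      ((ContinuousLinearMap.apply ℝ ℝ v).hasFDerivAt.comp_hasDerivAt 0 h3)
  rw [secondDirDeriv, hinner.deriv_eq, h2.deriv]

-- Cauchy-Riemann: gfun is holomorphic
lemma gfun_differentiableOn (R : ℝ) (h : ℂ → ℝ) (hharm : HarmonicOnSet h (annulus R)) :
    DifferentiableOn ℂ (gfun h) (annulus R) := by
  obtain ⟨hC2, hlap0⟩ := hharm
  set s := annulus R with hsdef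
  have hs : IsOpen s := isOpen_annulus R
  intro z hz
  suffices H : DifferentiableAt ℂ (gfun h) z from H.differentiableWithinAt
  set f'' := fderiv ℝ (fderiv ℝ h) z with hf''def
  have hev : ∀ᶠ y in nhds z, HasFDerivAt h (fderiv ℝ h y) y := by
    filter_upwards [hs.mem_nhds hz] with y hy
    exact ((hC2.contDiffAt (hs.mem_nhds hy)).differentiableAt two_ne_zero).hasFDerivAt
  have hf'' : HasFDerivAt (fderiv ℝ h) f'' z :=
    (((hC2.contDiffAt (hs.mem_nhds hz)).fderiv_right (m := 1)
      le_rfl).differentiableAt one_ne_zero).hasFDerivAt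
  have hsymm : f'' Complex.I 1 = f'' 1 Complex.I :=
    second_derivative_symmetric_of_eventually hev hf'' _ _
  have hlap : f'' Complex.I Complex.I = - f'' 1 1 := by
    have h1 := secondDirDeriv_eq h s hs hC2 hz 1
    have h2 := secondDirDeriv_eq h s hs hC2 hz Complex.I
    have h3 := hlap0 z hz
    rw [h1, h2] at h3
    linarith
  set φ : (ℂ →L[ℝ] ℝ) →L[ℝ] ℂ :=
    Complex.ofRealCLM.comp (ContinuousLinearMap.apply ℝ ℝ (1:ℂ))
      - Complex.I • Complex.ofRealCLM.comp (ContinuousLinearMap.apply ℝ ℝ Complex.I) with hφ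
  have hgf : gfun h = fun y => φ (fderiv ℝ h y) := by
    funext y
    simp [gfun, hφ, Complex.real_smul, smul_eq_mul]
  have hreal : HasFDerivAt (gfun h) (φ.comp f'') z := by
    rw [hgf]; exact φ.hasFDerivAt.comp z hf''
  set d : ℂ := ((f'' 1 1 : ℝ) : ℂ) - Complex.I * ((f'' 1 Complex.I : ℝ) : ℂ) with hd
  have H : ((ContinuousLinearMap.id ℂ ℂ).smulRight d).restrictScalars ℝ = φ.comp f'' := by
    apply ContinuousLinearMap.ext
    intro v
    obtain ⟨x, y, rfl⟩ : ∃ x y : ℝ, v = x • (1:ℂ) + y • Complex.I :=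
      ⟨v.re, v.im, by simp [Complex.real_smul, Complex.re_add_im]⟩
    simp only [ContinuousLinearMap.coe_restrictScalars', ContinuousLinearMap.smulRight_apply,
      ContinuousLinearMap.id_apply, ContinuousLinearMap.comp_apply, map_add,
      ContinuousLinearMap.map_smul, ContinuousLinearMap.add_apply,
      ContinuousLinearMap.smul_apply, hφ, ContinuousLinearMap.sub_apply,
      ContinuousLinearMap.coe_comp', Function.comp_apply,
      ContinuousLinearMap.apply_apply, Complex.ofRealCLM_apply, hsymm, hlap, hd]
    push_cast
    simp only [smul_eq_mul, Complex.real_smul]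
    ring_nf
    linear_combination (-(y:ℂ) * (f'' 1 Complex.I) + (y:ℂ) * 0) * Complex.I_sq
  exact (hasFDerivAt_of_restrictScalars ℝ hreal H).differentiableAt

def emap (θ : ℝ) : ℂ := Complex.exp (2 * Real.pi * Complex.I * θ)
def γmap (r θ : ℝ) : ℂ := (r : ℂ) * emap θ

lemma emap_abs (θ : ℝ) : ‖emap θ‖ = 1 := by
  simp [emap, Complex.norm_exp]

lemma γmap_abs (r θ : ℝ) (hr : 0 ≤ r) : ‖γmap r θ‖ = r := by
  rw [γmap, norm_mul, emap_abs, mul_one, Complex.norm_real, Real.norm_eq_abs, _root_.abs_of_nonneg hr]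

lemma γmap_mem_annulus (R : ℝ) (r θ : ℝ) (h0 : 0 < r) (h1 : 1/R < r) (h2 : r < R) :
    γmap r θ ∈ annulus R := by
  constructor <;> rw [γmap_abs r θ h0.le] <;> assumption

lemma γmap_mem_closedAnnulus (R : ℝ) (r θ : ℝ) (h0 : 0 ≤ r) (h1 : 1/R ≤ r) (h2 : r ≤ R) :
    γmap r θ ∈ closedAnnulus R := by
  constructor <;> rw [γmap_abs r θ h0] <;> assumption

lemma continuous_emap : Continuous emap := by
  exact Complex.continuous_exp.comp (by continuity)

lemma hasDerivAt_emap (θ : ℝ) :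
    HasDerivAt emap (2 * Real.pi * Complex.I * emap θ) θ := by
  have h1 : HasDerivAt (fun w : ℂ => Complex.exp (2 * Real.pi * Complex.I * w))
      (Complex.exp (2 * Real.pi * Complex.I * θ) * (2 * Real.pi * Complex.I)) (θ : ℂ) := by
    simpa using ((hasDerivAt_id ((θ:ℝ) : ℂ)).const_mul
      ((2:ℂ) * Real.pi * Complex.I)).cexp
  have h2 := h1.comp_ofReal
  have : Complex.exp (2 * Real.pi * Complex.I * θ) * (2 * Real.pi * Complex.I)
      = 2 * Real.pi * Complex.I * emap θ := by rw [emap]; ring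
  rw [this] at h2
  exact h2

lemma hasDerivAt_γmap (r θ : ℝ) :
    HasDerivAt (γmap r) (2 * Real.pi * Complex.I * γmap r θ) θ := by
  have := (hasDerivAt_emap θ).const_mul (r : ℂ)
  convert this using 1
  · rfl
  · rfl
  · show 2 * Real.pi * Complex.I * ((r:ℂ) * emap θ) = _; ring

lemma hasDerivAt_h_γmap (R : ℝ) (h : ℂ → ℝ) (hharm : HarmonicOnSet h (annulus R))
    {r θ : ℝ} (hmem : γmap r θ ∈ annulus R) :
    HasDerivAt (fun t : ℝ => h (γmap r t))
      ((gfun h (γmap r θ) * (2 * Real.pi * Complex.I * γmap r θ)).re) θ := by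
  have hd : DifferentiableAt ℝ h (γmap r θ) :=
    (hharm.1.contDiffAt ((isOpen_annulus R).mem_nhds hmem)).differentiableAt two_ne_zero
  have := hd.hasFDerivAt.comp_hasDerivAt θ (hasDerivAt_γmap r θ)
  rwa [fderiv_apply_eq] at this

def fcoef (h : ℂ → ℝ) (k : ℤ) (r : ℝ) : ℂ :=
  ∫ θ in (0:ℝ)..1, ((h (γmap r θ) : ℝ) : ℂ)
      * Complex.exp (-2 * Real.pi * Complex.I * (k : ℂ) * (θ : ℂ))

lemma continuous_expk (k : ℤ) :
    Continuous (fun θ : ℝ => Complex.exp (-2 * Real.pi * Complex.I * (k : ℂ) * (θ : ℂ))) := by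
  exact Complex.continuous_exp.comp (by continuity)

lemma hasDerivAt_expk (k : ℤ) (θ : ℝ) :
    HasDerivAt (fun θ : ℝ => Complex.exp (-2 * Real.pi * Complex.I * (k : ℂ) * (θ : ℂ)))
      ((-2 * Real.pi * Complex.I * (k : ℂ))
        * Complex.exp (-2 * Real.pi * Complex.I * (k : ℂ) * (θ : ℂ))) θ := by
  have h0 := ((hasDerivAt_id ((θ:ℝ) : ℂ)).const_mul
      ((-2:ℂ) * Real.pi * Complex.I * (k:ℂ))).cexp
  simp only [id_eq, mul_one] at h0
  have h2 := h0.comp_ofReal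
  have e : Complex.exp (-2 * Real.pi * Complex.I * (k:ℂ) * (θ:ℂ))
        * (-2 * Real.pi * Complex.I * (k:ℂ))
      = (-2 * Real.pi * Complex.I * (k:ℂ))
        * Complex.exp (-2 * Real.pi * Complex.I * (k:ℂ) * (θ:ℂ)) := mul_comm _ _
  rw [e] at h2
  exact h2

lemma ibp (R : ℝ) (hR : 1 < R) (h : ℂ → ℝ) (hharm : HarmonicOnSet h (annulus R))
    (k : ℤ) (r : ℝ) (hr1 : 1/R < r) (hr2 : r < R) :
    (2 * Real.pi * Complex.I * (k:ℂ)) * fcoef h k r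
      = ∫ θ in (0:ℝ)..1,
          ((gfun h (γmap r θ) * (2 * Real.pi * Complex.I * γmap r θ)).re : ℂ)
            * Complex.exp (-2 * Real.pi * Complex.I * (k : ℂ) * (θ : ℂ)) := by
  have hr0 : 0 < r := lt_trans (by positivity) hr1
  have hmem : ∀ θ : ℝ, γmap r θ ∈ annulus R := fun θ => γmap_mem_annulus R r θ hr0 hr1 hr2
  set u : ℝ → ℂ := fun θ => ((h (γmap r θ) : ℝ) : ℂ) with hu_def
  set u' : ℝ → ℂ := fun θ =>
    ((gfun h (γmap r θ) * (2 * Real.pi * Complex.I * γmap r θ)).re : ℂ) with hu'_def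
  set v : ℝ → ℂ := fun θ => Complex.exp (-2 * Real.pi * Complex.I * (k : ℂ) * (θ : ℂ)) with hv_def
  set v' : ℝ → ℂ := fun θ => (-2 * Real.pi * Complex.I * (k : ℂ)) * v θ with hv'_def
  have hu : ∀ θ ∈ Set.uIcc (0:ℝ) 1, HasDerivAt u (u' θ) θ := by
    intro θ _
    exact Complex.ofRealCLM.hasFDerivAt.comp_hasDerivAt θ
      (hasDerivAt_h_γmap R h hharm (hmem θ))
  have hv : ∀ θ ∈ Set.uIcc (0:ℝ) 1, HasDerivAt v (v' θ) θ := fun θ _ => hasDerivAt_expk k θ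
  have hγcont : Continuous (γmap r) := continuous_const.mul continuous_emap
  have hgcont : Continuous (fun θ => gfun h (γmap r θ)) := by
    rw [continuous_iff_continuousAt]
    intro θ
    exact (((gfun_differentiableOn R h hharm).differentiableAt
      ((isOpen_annulus R).mem_nhds (hmem θ))).continuousAt).comp hγcont.continuousAt
  have hu'cont : Continuous u' := by
    apply Complex.continuous_ofReal.comp
    exact Complex.continuous_re.comp (hgcont.mul (continuous_const.mul hγcont))
  have hu'int : IntervalIntegrable u' volume 0 1 := hu'cont.intervalIntegrable 0 1
  have hv'int : IntervalIntegrable v' volume 0 1 :=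
    (continuous_const.mul (continuous_expk k)).intervalIntegrable 0 1
  have key := intervalIntegral.integral_mul_deriv_eq_deriv_mul hu hv hu'int hv'int
  have hbd : u 1 * v 1 - u 0 * v 0 = 0 := by
    have e1 : emap 1 = emap 0 := by
      rw [emap, emap,
        show (2:ℂ) * Real.pi * Complex.I * ((1:ℝ):ℂ) = (1:ℤ) * (2*Real.pi*Complex.I) by
          push_cast; ring,
        Complex.exp_int_mul_two_pi_mul_I,
        show (2:ℂ) * Real.pi * Complex.I * ((0:ℝ):ℂ) = 0 by push_cast; ring,
        Complex.exp_zero]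
    have e2 : v 1 = v 0 := by
      show Complex.exp _ = Complex.exp _
      rw [show (-2:ℂ) * Real.pi * Complex.I * (k:ℂ) * ((1:ℝ):ℂ)
            = (-k : ℤ) * (2*Real.pi*Complex.I) by push_cast; ring,
        Complex.exp_int_mul_two_pi_mul_I,
        show (-2:ℂ) * Real.pi * Complex.I * (k:ℂ) * ((0:ℝ):ℂ) = 0 by push_cast; ring,
        Complex.exp_zero]
    simp only [hu_def, γmap, e1, e2]
    ring
  have hlhs : ∫ θ in (0:ℝ)..1, u θ * v' θ
      = (-2 * Real.pi * Complex.I * (k:ℂ)) * fcoef h k r := by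
    rw [fcoef]
    rw [← intervalIntegral.integral_const_mul]
    apply intervalIntegral.integral_congr
    intro θ _
    simp only [hv'_def]; ring
  rw [hlhs, hbd] at key
  have : (2 * Real.pi * Complex.I * (k:ℂ)) * fcoef h k r
      = -((-2 * Real.pi * Complex.I * (k:ℂ)) * fcoef h k r) := by ring
  rw [this, key]
  simp only [zero_sub, neg_neg]
  rfl

def Jint (h : ℂ → ℝ) (n : ℤ) (r : ℝ) : ℂ :=
  ∫ θ in (0:ℝ)..1, gfun h (γmap r θ) * (2 * Real.pi * Complex.I * γmap r θ)
      * Complex.exp (2 * Real.pi * Complex.I * (n : ℂ) * (θ : ℂ))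

lemma intervalIntegral_conj (f : ℝ → ℂ) (a b : ℝ) :
    ∫ x in a..b, (starRingEnd ℂ) (f x) = (starRingEnd ℂ) (∫ x in a..b, f x) := by
  unfold intervalIntegral
  rw [integral_conj, integral_conj, ← map_sub]

lemma continuous_gγ (R : ℝ) (h : ℂ → ℝ) (hharm : HarmonicOnSet h (annulus R))
    {r : ℝ} (hr0 : 0 < r) (hr1 : 1/R < r) (hr2 : r < R) :
    Continuous (fun θ => gfun h (γmap r θ)) := by
  have hγcont : Continuous (γmap r) := continuous_const.mul continuous_emap
  rw [continuous_iff_continuousAt]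
  intro θ
  exact (((gfun_differentiableOn R h hharm).differentiableAt
    ((isOpen_annulus R).mem_nhds (γmap_mem_annulus R r θ hr0 hr1 hr2))).continuousAt).comp
    hγcont.continuousAt

lemma re_split (R : ℝ) (h : ℂ → ℝ) (hharm : HarmonicOnSet h (annulus R))
    (k : ℤ) {r : ℝ} (hr0 : 0 < r) (hr1 : 1/R < r) (hr2 : r < R) :
    (∫ θ in (0:ℝ)..1, ((gfun h (γmap r θ) * (2 * Real.pi * Complex.I * γmap r θ)).re : ℂ)
        * Complex.exp (-2 * Real.pi * Complex.I * (k : ℂ) * (θ : ℂ)))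
    = (Jint h (-k) r + (starRingEnd ℂ) (Jint h k r)) / 2 := by
  set W : ℝ → ℂ := fun θ => gfun h (γmap r θ) * (2 * Real.pi * Complex.I * γmap r θ) with hW
  have hWcont : Continuous W :=
    (continuous_gγ R h hharm hr0 hr1 hr2).mul (continuous_const.mul
      (continuous_const.mul continuous_emap))
  have hpt : ∀ θ : ℝ, ((W θ).re : ℂ)
      * Complex.exp (-2 * Real.pi * Complex.I * (k : ℂ) * (θ : ℂ))
      = (W θ * Complex.exp (2 * Real.pi * Complex.I * ((-k : ℤ) : ℂ) * (θ : ℂ))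
        + (starRingEnd ℂ) (W θ * Complex.exp (2 * Real.pi * Complex.I * (k : ℂ) * (θ : ℂ)))) / 2 := by
    intro θ
    have h1 : ((W θ).re : ℂ) = (W θ + (starRingEnd ℂ) (W θ)) / 2 := by
      rw [Complex.add_conj]; push_cast; ring
    have h2 : (starRingEnd ℂ) (Complex.exp (2 * Real.pi * Complex.I * (k : ℂ) * (θ : ℂ)))
        = Complex.exp (-2 * Real.pi * Complex.I * (k : ℂ) * (θ : ℂ)) := by
      rw [← Complex.exp_conj]
      congr 1
      simp only [map_mul, Complex.conj_I, Complex.conj_ofReal, map_intCast, map_ofNat]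
      ring
    have h3 : Complex.exp (2 * Real.pi * Complex.I * ((-k : ℤ) : ℂ) * (θ : ℂ))
        = Complex.exp (-2 * Real.pi * Complex.I * (k : ℂ) * (θ : ℂ)) := by
      congr 1; push_cast; ring
    rw [h1, h3, map_mul (starRingEnd ℂ) (W θ), h2]
    ring
  rw [intervalIntegral.integral_congr (g := fun θ =>
    (W θ * Complex.exp (2 * Real.pi * Complex.I * ((-k : ℤ) : ℂ) * (θ : ℂ))
      + (starRingEnd ℂ) (W θ * Complex.exp (2 * Real.pi * Complex.I * (k : ℂ) * (θ : ℂ)))) / 2)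
    (fun θ _ => hpt θ)]
  rw [intervalIntegral.integral_div]
  have hi1 : IntervalIntegrable (fun θ : ℝ =>
      W θ * Complex.exp (2 * Real.pi * Complex.I * ((-k : ℤ) : ℂ) * (θ : ℂ))) volume 0 1 := by
    apply Continuous.intervalIntegrable
    apply hWcont.mul
    exact Complex.continuous_exp.comp (by continuity)
  have hi2 : IntervalIntegrable (fun θ : ℝ => (starRingEnd ℂ)
      (W θ * Complex.exp (2 * Real.pi * Complex.I * (k : ℂ) * (θ : ℂ)))) volume 0 1 := by
    apply Continuous.intervalIntegrable
    apply Complex.continuous_conj.comp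
    apply hWcont.mul
    exact Complex.continuous_exp.comp (by continuity)
  rw [intervalIntegral.integral_add hi1 hi2]
  rw [intervalIntegral_conj]
  rfl

lemma γmap_eq_circleMap (r θ : ℝ) : γmap r θ = circleMap 0 r (2 * Real.pi * θ) := by
  rw [γmap, emap, circleMap_zero]
  congr 1
  push_cast
  ring

lemma Jint_eq_circle (h : ℂ → ℝ) (n : ℤ) (r : ℝ) (hr0 : 0 < r) :
    Jint h n r = (((r:ℂ) ^ (n:ℤ))⁻¹) * ∮ z in C(0, r), gfun h z * z ^ (n:ℤ) := by
  have hrC : ((r:ℂ)) ≠ 0 := Complex.ofReal_ne_zero.mpr hr0.ne'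
  have hrn : ((r:ℂ) ^ (n:ℤ)) ≠ 0 := zpow_ne_zero n hrC
  set F : ℝ → ℂ := fun t => gfun h (circleMap 0 r t)
      * (2 * Real.pi * Complex.I * circleMap 0 r t)
      * ((circleMap 0 r t) ^ (n:ℤ) * ((r:ℂ) ^ (n:ℤ))⁻¹) with hF
  have hpt : ∀ θ : ℝ, gfun h (γmap r θ) * (2 * Real.pi * Complex.I * γmap r θ)
      * Complex.exp (2 * Real.pi * Complex.I * (n : ℂ) * (θ : ℂ))
      = F (2 * Real.pi * θ) := by
    intro θ
    simp only [hF, ← γmap_eq_circleMap]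
    congr 1
    have hexp : (γmap r θ) ^ (n:ℤ)
        = (r:ℂ) ^ (n:ℤ) * Complex.exp (2 * Real.pi * Complex.I * (n : ℂ) * (θ : ℂ)) := by
      rw [γmap, mul_zpow, emap, ← Complex.exp_int_mul]
      congr 2
      push_cast
      ring
    rw [hexp]
    field_simp
  have h1 : Jint h n r = ∫ θ in (0:ℝ)..1, F (2 * Real.pi * θ) :=
    intervalIntegral.integral_congr (fun θ _ => hpt θ)
  have h2 : ∫ θ in (0:ℝ)..1, F (2 * Real.pi * θ)
      = (2 * Real.pi)⁻¹ • ∫ t in (2 * Real.pi * 0)..(2 * Real.pi * 1), F t := by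
    rw [intervalIntegral.integral_comp_mul_left F (by positivity : (0:ℝ) < 2 * Real.pi).ne']
  have h3 : ∫ t in (0:ℝ)..(2 * Real.pi), F t
      = ((r:ℂ) ^ (n:ℤ))⁻¹ * (2 * Real.pi)
        * ∮ z in C(0, r), gfun h z * z ^ (n:ℤ) := by
    have : (∮ z in C(0, r), gfun h z * z ^ (n:ℤ))
        = ∫ t in (0:ℝ)..(2 * Real.pi),
            deriv (circleMap 0 r) t • (gfun h (circleMap 0 r t) * (circleMap 0 r t) ^ (n:ℤ)) := rfl
    rw [this, ← intervalIntegral.integral_const_mul]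
    apply intervalIntegral.integral_congr
    intro t _
    rw [hF]
    simp only [deriv_circleMap, smul_eq_mul]
    ring
  rw [h1, h2]
  rw [mul_zero, mul_one, h3]
  rw [Complex.real_smul]
  push_cast
  have hπ : ((Real.pi : ℝ) : ℂ) ≠ 0 := by
    exact_mod_cast Real.pi_ne_zero
  field_simp

lemma circle_indep (R : ℝ) (hR : 1 < R) (h : ℂ → ℝ) (hharm : HarmonicOnSet h (annulus R))
    (n : ℤ) {r r' : ℝ} (h1 : 1/R < r) (h2 : r ≤ r') (h3 : r' < R) :
    (∮ z in C(0, r'), gfun h z * z ^ (n:ℤ)) = ∮ z in C(0, r), gfun h z * z ^ (n:ℤ) := by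
  have hr0 : 0 < r := lt_trans (by positivity) h1
  have hsub : ∀ z : ℂ, z ∈ Metric.closedBall (0:ℂ) r' \ Metric.ball 0 r →
      z ∈ annulus R ∧ z ≠ 0 := by
    intro z hz
    obtain ⟨hz1, hz2⟩ := hz
    rw [Metric.mem_closedBall, dist_zero_right] at hz1
    rw [Metric.mem_ball, dist_zero_right, not_lt] at hz2
    refine ⟨⟨lt_of_lt_of_le h1 hz2, lt_of_le_of_lt hz1 h3⟩, ?_⟩
    intro hz0
    rw [hz0] at hz2
    simp at hz2
    linarith
  have hdiff : ∀ z ∈ annulus R, z ≠ 0 → DifferentiableAt ℂ (fun z : ℂ => gfun h z * z ^ (n:ℤ)) z := by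
    intro z hz hz0
    exact ((gfun_differentiableOn R h hharm).differentiableAt
      ((isOpen_annulus R).mem_nhds hz)).mul ((differentiableAt_zpow).mpr (Or.inl hz0))
  apply circleIntegral_eq_of_differentiable_on_annulus_off_countable hr0 h2 Set.countable_empty
  · intro z hz
    obtain ⟨hz1, hz2⟩ := hsub z hz
    exact ((hdiff z hz1 hz2).continuousAt).continuousWithinAt
  · intro z hz
    have hz' : z ∈ Metric.closedBall (0:ℂ) r' \ Metric.ball 0 r := by
      obtain ⟨⟨ha, hb⟩, -⟩ := hz
      exact ⟨Metric.ball_subset_closedBall ha, fun hc => hb (Metric.ball_subset_closedBall hc)⟩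
    obtain ⟨hz1, hz2⟩ := hsub z hz'
    exact hdiff z hz1 hz2

lemma exists_coeffs (R : ℝ) (hR : 1 < R) (h : ℂ → ℝ) (hharm : HarmonicOnSet h (annulus R))
    (k : ℤ) (hk : k ≠ 0) :
    ∃ a b : ℂ, ∀ r : ℝ, 1/R < r → r < R →
      fcoef h k r = a * (r:ℂ) ^ (k:ℤ) + b * (r:ℂ) ^ (-k:ℤ) := by
  have hR0 : (0:ℝ) < R := by linarith
  have h1R : 1/R < 1 := by
    rw [div_lt_one hR0]; exact hR
  have h1R' : (1:ℝ) < R := hR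
  set A := ∮ z in C(0, (1:ℝ)), gfun h z * z ^ (-k:ℤ) with hA
  set B := ∮ z in C(0, (1:ℝ)), gfun h z * z ^ (k:ℤ) with hB
  have hc : (2 * Real.pi * Complex.I * (k:ℂ)) ≠ 0 := by
    simp [Real.pi_ne_zero, Complex.I_ne_zero, hk]
  refine ⟨A / (2 * (2 * Real.pi * Complex.I * (k:ℂ))),
      (starRingEnd ℂ) B / (2 * (2 * Real.pi * Complex.I * (k:ℂ))), ?_⟩
  intro r hr1 hr2
  have hr0 : 0 < r := lt_trans (by positivity) hr1
  have hrC : ((r:ℂ)) ≠ 0 := Complex.ofReal_ne_zero.mpr hr0.ne'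
  -- radius independence at both exponents
  have hAr : (∮ z in C(0, r), gfun h z * z ^ (-k:ℤ)) = A := by
    rcases le_total r 1 with hle | hle
    · exact (circle_indep R hR h hharm (-k) hr1 hle h1R').symm
    · exact circle_indep R hR h hharm (-k) h1R hle hr2
  have hBr : (∮ z in C(0, r), gfun h z * z ^ (k:ℤ)) = B := by
    rcases le_total r 1 with hle | hle
    · exact (circle_indep R hR h hharm k hr1 hle h1R').symm
    · exact circle_indep R hR h hharm k h1R hle hr2
  have key := ibp R hR h hharm k r hr1 hr2
  rw [re_split R h hharm k hr0 hr1 hr2] at key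
  rw [Jint_eq_circle h (-k) r hr0, Jint_eq_circle h k r hr0, hAr, hBr] at key
  have e1 : (((r:ℂ) ^ (-k:ℤ))⁻¹) = (r:ℂ) ^ (k:ℤ) := by
    rw [zpow_neg, inv_inv]
  have e2 : (starRingEnd ℂ) (((r:ℂ) ^ (k:ℤ))⁻¹ * B)
      = ((r:ℂ) ^ (k:ℤ))⁻¹ * (starRingEnd ℂ) B := by
    rw [map_mul, map_inv₀]
    congr 2
    rw [map_zpow₀, Complex.conj_ofReal]
  rw [e1, e2] at key
  have hrk : ((r:ℂ) ^ (k:ℤ)) ≠ 0 := zpow_ne_zero k hrC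
  rw [zpow_neg]
  field_simp at key ⊢
  linear_combination key

lemma conj_γmap_inv (r θ : ℝ) (hr : r ≠ 0) :
    ((starRingEnd ℂ) (γmap r θ))⁻¹ = γmap r⁻¹ θ := by
  have h1 : (starRingEnd ℂ) (emap θ) = Complex.exp (-(2 * Real.pi * Complex.I * θ)) := by
    rw [emap, ← Complex.exp_conj]
    congr 1
    simp only [map_mul, map_neg, Complex.conj_I, Complex.conj_ofReal, map_ofNat]
    ring
  rw [γmap, γmap, map_mul, Complex.conj_ofReal, h1, mul_inv, ← Complex.exp_neg, neg_neg, ← emap]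
  push_cast
  ring

lemma fcoef_symm (R : ℝ) (hR : 1 < R) (h : ℂ → ℝ)
    (hsym : ∀ z ∈ closedAnnulus R, h z = h ((starRingEnd ℂ) z)⁻¹)
    (k : ℤ) {r : ℝ} (hr0 : 0 < r) (hr1 : 1/R ≤ r) (hr2 : r ≤ R) :
    fcoef h k r = fcoef h k r⁻¹ := by
  apply intervalIntegral.integral_congr
  intro θ _
  have hmem := γmap_mem_closedAnnulus R r θ hr0.le hr1 hr2
  have := hsym _ hmem
  rw [conj_γmap_inv r θ hr0.ne'] at this
  simp only [this]

lemma isCompact_closedAnnulus (R : ℝ) (hR : 0 < R) : IsCompact (closedAnnulus R) := by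
  apply IsCompact.of_isClosed_subset (isCompact_closedBall (0:ℂ) R)
  · have : closedAnnulus R =
        (fun z : ℂ => ‖z‖) ⁻¹' (Set.Icc (1/R) R) := rfl
    rw [this]
    exact IsClosed.preimage continuous_norm isClosed_Icc
  · intro z hz
    rw [Metric.mem_closedBall, dist_zero_right]
    exact hz.2

lemma abs_expk (k : ℤ) (θ : ℝ) :
    ‖Complex.exp (-2 * Real.pi * Complex.I * (k : ℂ) * (θ : ℂ))‖ = 1 := by
  rw [Complex.norm_exp]
  have : (-2 * Real.pi * Complex.I * (k : ℂ) * (θ : ℂ)).re = 0 := by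
    simp [Complex.mul_re, Complex.mul_im]
  rw [this, Real.exp_zero]

lemma sphere_subset_closedAnnulus (R : ℝ) (hR : 1 ≤ R) :
    {z : ℂ | ‖z‖ = R} ⊆ closedAnnulus R := by
  intro z hz
  rw [Set.mem_setOf_eq] at hz
  constructor
  · rw [hz]
    calc 1/R ≤ 1 := by rw [div_le_one (by linarith)]; exact hR
    _ ≤ R := hR
  · rw [hz]

lemma Mfacts (R : ℝ) (hR : 1 < R) (h : ℂ → ℝ) (hcont : ContinuousOn h (closedAnnulus R)) :
    (0 ≤ sSup ((fun z : ℂ => |h z|) '' {z : ℂ | ‖z‖ = R}))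
    ∧ ∀ θ : ℝ, |h (γmap R θ)| ≤ sSup ((fun z : ℂ => |h z|) '' {z : ℂ | ‖z‖ = R}) := by
  have hsub := sphere_subset_closedAnnulus R hR.le
  have hsphere : {z : ℂ | ‖z‖ = R} = Metric.sphere (0:ℂ) R := by
    ext z
    rw [Metric.mem_sphere, dist_zero_right, Set.mem_setOf_eq]
  have hcpt : IsCompact ((fun z : ℂ => |h z|) '' {z : ℂ | ‖z‖ = R}) := by
    rw [hsphere]
    apply IsCompact.image_of_continuousOn (isCompact_sphere 0 R)
    exact (hcont.mono (hsphere ▸ hsub)).abs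
  have hbdd : BddAbove ((fun z : ℂ => |h z|) '' {z : ℂ | ‖z‖ = R}) := hcpt.bddAbove
  have hmem : ∀ θ : ℝ, |h (γmap R θ)|
      ∈ (fun z : ℂ => |h z|) '' {z : ℂ | ‖z‖ = R} := by
    intro θ
    exact ⟨γmap R θ, γmap_abs R θ (by linarith), rfl⟩
  constructor
  · exact le_trans (abs_nonneg _) (le_csSup hbdd (hmem 0))
  · intro θ
    exact le_csSup hbdd (hmem θ)

lemma fcoef_outer_bound (R : ℝ) (hR : 1 < R) (h : ℂ → ℝ)
    (hcont : ContinuousOn h (closedAnnulus R)) (k : ℤ) :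
    ‖fcoef h k R‖
      ≤ sSup ((fun z : ℂ => |h z|) '' {z : ℂ | ‖z‖ = R}) := by
  obtain ⟨hM0, hMb⟩ := Mfacts R hR h hcont
  rw [fcoef]
  calc ‖∫ θ in (0:ℝ)..1, ((h (γmap R θ) : ℝ) : ℂ)
      * Complex.exp (-2 * Real.pi * Complex.I * (k : ℂ) * (θ : ℂ))‖
      ≤ sSup ((fun z : ℂ => |h z|) '' {z : ℂ | ‖z‖ = R}) * |1 - 0| := by
        apply intervalIntegral.norm_integral_le_of_norm_le_const
        intro θ _
        rw [norm_mul, abs_expk, mul_one,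
          Complex.norm_real, Real.norm_eq_abs]
        exact hMb θ
    _ = _ := by norm_num

lemma fcoef_tendsto (R : ℝ) (hR : 1 < R) (h : ℂ → ℝ)
    (hcont : ContinuousOn h (closedAnnulus R)) (k : ℤ) :
    Tendsto (fun r => fcoef h k r) (nhdsWithin R (Set.Ioo 1 R)) (nhds (fcoef h k R)) := by
  have hR0 : (0:ℝ) < R := by linarith
  obtain ⟨C, hC⟩ := (isCompact_closedAnnulus R hR0).exists_bound_of_continuousOn hcont
  have hmemr : ∀ r ∈ Set.Ioo (1:ℝ) R, ∀ θ : ℝ, γmap r θ ∈ closedAnnulus R := by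
    intro r hr θ
    apply γmap_mem_closedAnnulus R r θ (show (0:ℝ) ≤ r by linarith [hr.1])
    · calc 1/R ≤ 1 := by rw [div_le_one hR0]; exact hR.le
      _ ≤ r := hr.1.le
    · exact hr.2.le
  apply intervalIntegral.tendsto_integral_filter_of_dominated_convergence (fun _ => C)
  · filter_upwards [self_mem_nhdsWithin] with r hr
    apply Continuous.aestronglyMeasurable
    apply Continuous.mul
    · apply Complex.continuous_ofReal.comp
      exact hcont.comp_continuous (continuous_const.mul continuous_emap) (hmemr r hr)
    · exact continuous_expk k
  · filter_upwards [self_mem_nhdsWithin] with r hr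
    apply Filter.Eventually.of_forall
    intro θ _
    rw [norm_mul, abs_expk, mul_one,
      Complex.norm_real, Real.norm_eq_abs]
    exact (Real.norm_eq_abs _) ▸ hC _ (hmemr r hr θ)
  · exact intervalIntegrable_const
  · apply Filter.Eventually.of_forall
    intro θ _
    apply Tendsto.mul _ tendsto_const_nhds
    apply Tendsto.comp (Complex.continuous_ofReal.tendsto _)
    have h1 : Tendsto (fun r : ℝ => γmap r θ) (nhdsWithin R (Set.Ioo 1 R))
        (nhdsWithin (γmap R θ) (closedAnnulus R)) := by
      rw [tendsto_nhdsWithin_iff]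
      constructor
      · apply Tendsto.mono_left _ nhdsWithin_le_nhds
        exact ((Complex.continuous_ofReal.mul continuous_const).tendsto R)
      · filter_upwards [self_mem_nhdsWithin] with r hr
        exact hmemr r hr θ
    have hRmem : γmap R θ ∈ closedAnnulus R :=
      γmap_mem_closedAnnulus R R θ hR0.le
        (le_trans (by rw [div_le_one hR0]; exact hR.le) hR.le) le_rfl
    exact Filter.Tendsto.comp (hcont.continuousWithinAt hRmem) h1

lemma core (R : ℝ) (hR : 1 < R) (h : ℂ → ℝ)
    (hcont : ContinuousOn h (closedAnnulus R))
    (hharm : HarmonicOnSet h (annulus R))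
    (hsym : ∀ z ∈ closedAnnulus R, h z = h ((starRingEnd ℂ) z)⁻¹)
    (k : ℤ) (hk : 1 ≤ k) :
    ‖fcoef h k 1‖
      ≤ 2 * sSup ((fun z : ℂ => |h z|) '' {z : ℂ | ‖z‖ = R})
        * R ^ (-(k.natAbs : ℤ)) := by
  have hR0 : (0:ℝ) < R := by linarith
  have h1R : 1/R < 1 := by rw [div_lt_one hR0]; exact hR
  have hk0 : k ≠ 0 := by omega
  obtain ⟨a, b, hab⟩ := exists_coeffs R hR h hharm k hk0
  set M := sSup ((fun z : ℂ => |h z|) '' {z : ℂ | ‖z‖ = R}) with hM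
  obtain ⟨hM0, -⟩ := Mfacts R hR h hcont
  set r0 : ℝ := (1 + R)/2 with hr0def
  have hr01 : 1 < r0 := by rw [hr0def]; linarith
  have hr0R : r0 < R := by rw [hr0def]; linarith
  have hr00 : (0:ℝ) < r0 := by linarith
  have hr0inv1 : 1/R < r0⁻¹ := by
    rw [← one_div, div_lt_div_iff₀ hR0 hr00]
    linarith
  have hr0invR : r0⁻¹ < R := by
    have h2 : 1/r0 < 1 := (div_lt_one hr00).mpr hr01
    rw [one_div] at h2
    linarith
  -- the three evaluations
  have heq1 : fcoef h k 1 = a + b := by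
    have := hab 1 h1R hR
    simpa using this
  have heq2 : fcoef h k r0 = a * (r0:ℂ) ^ (k:ℤ) + b * (r0:ℂ) ^ (-k:ℤ) :=
    hab r0 (lt_trans h1R hr01) hr0R
  have heq3 : fcoef h k r0⁻¹ = a * (r0:ℂ) ^ (-k:ℤ) + b * (r0:ℂ) ^ (k:ℤ) := by
    have := hab r0⁻¹ hr0inv1 hr0invR
    rw [Complex.ofReal_inv] at this
    rw [this, inv_zpow, inv_zpow, ← zpow_neg, ← zpow_neg, neg_neg]
  have hsymr : fcoef h k r0 = fcoef h k r0⁻¹ :=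
    fcoef_symm R hR h hsym k hr00 (by linarith) hr0R.le
  -- a = b
  have hcomb : a * (r0:ℂ) ^ (k:ℤ) + b * (r0:ℂ) ^ (-k:ℤ)
      = a * (r0:ℂ) ^ (-k:ℤ) + b * (r0:ℂ) ^ (k:ℤ) := by
    rw [← heq2, hsymr, heq3]
  have hxy : ((r0:ℂ)) ^ (k:ℤ) ≠ ((r0:ℂ)) ^ (-k:ℤ) := by
    rw [← Complex.ofReal_zpow, ← Complex.ofReal_zpow]
    intro hcc
    have hrr : r0 ^ (k:ℤ) = r0 ^ (-k:ℤ) := by exact_mod_cast hcc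
    have : r0 ^ (-k:ℤ) < r0 ^ (k:ℤ) := zpow_lt_zpow_right₀ hr01 (by omega)
    linarith
  have hub : a = b := by
    have h5 : (a - b) * ((r0:ℂ) ^ (k:ℤ) - (r0:ℂ) ^ (-k:ℤ)) = 0 := by
      linear_combination hcomb
    rcases mul_eq_zero.mp h5 with h6 | h6
    · exact sub_eq_zero.mp h6
    · exact absurd (sub_eq_zero.mp h6) hxy
  subst hub
  -- boundary identification
  have hNB : (nhdsWithin R (Set.Ioo 1 R)).NeBot := by
    rw [← mem_closure_iff_nhdsWithin_neBot, closure_Ioo (by linarith : (1:ℝ) ≠ R)]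
    exact ⟨hR.le, le_rfl⟩
  have hlim1 := fcoef_tendsto R hR h hcont k
  have hlim2 : Tendsto (fun r : ℝ => a * (r:ℂ) ^ (k:ℤ) + a * (r:ℂ) ^ (-k:ℤ))
      (nhdsWithin R (Set.Ioo 1 R))
      (nhds (a * (R:ℂ) ^ (k:ℤ) + a * (R:ℂ) ^ (-k:ℤ))) := by
    apply Tendsto.mono_left _ nhdsWithin_le_nhds
    have hRC : ((R:ℝ):ℂ) ≠ 0 := Complex.ofReal_ne_zero.mpr hR0.ne'
    have hz1 : ContinuousAt (fun r : ℝ => ((r:ℂ)) ^ (k:ℤ)) R :=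
      (Complex.continuous_ofReal.continuousAt).zpow₀ k (Or.inl hRC)
    have hz2 : ContinuousAt (fun r : ℝ => ((r:ℂ)) ^ (-k:ℤ)) R :=
      (Complex.continuous_ofReal.continuousAt).zpow₀ (-k) (Or.inl hRC)
    exact ((hz1.tendsto.const_mul a).add (hz2.tendsto.const_mul a))
  have hevEq : ∀ᶠ r in nhdsWithin R (Set.Ioo 1 R),
      fcoef h k r = a * (r:ℂ) ^ (k:ℤ) + a * (r:ℂ) ^ (-k:ℤ) := by
    filter_upwards [self_mem_nhdsWithin] with r hr
    exact hab r (lt_trans h1R hr.1) hr.2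
  have hbdry : fcoef h k R = a * (R:ℂ) ^ (k:ℤ) + a * (R:ℂ) ^ (-k:ℤ) :=
    tendsto_nhds_unique ((tendsto_congr' hevEq).mp hlim1) hlim2
  -- bound on |a|
  set X : ℝ := R ^ (k:ℤ) with hX
  set Y : ℝ := R ^ (-k:ℤ) with hY
  have hXpos : 0 < X := zpow_pos hR0 k
  have hYpos : 0 < Y := zpow_pos hR0 (-k)
  have habsR : ‖fcoef h k R‖ = ‖a‖ * (X + Y) := by
    rw [hbdry, ← mul_add, norm_mul]
    congr 1
    rw [← Complex.ofReal_zpow, ← Complex.ofReal_zpow, ← Complex.ofReal_add,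
      Complex.norm_real, Real.norm_eq_abs, _root_.abs_of_nonneg (by positivity)]
  have hMbound : ‖a‖ * (X + Y) ≤ M := by
    rw [← habsR]
    exact fcoef_outer_bound R hR h hcont k
  have haX : ‖a‖ * X ≤ M := by
    nlinarith [norm_nonneg a]
  -- conclude
  have hfc1 : ‖fcoef h k 1‖ = 2 * ‖a‖ := by
    rw [heq1, show a + a = 2 * a by ring, norm_mul]
    norm_num
  have hnat : (-(k.natAbs : ℤ)) = -k := by
    rw [Int.natAbs_of_nonneg (by omega)]
  rw [hfc1, hnat, ← hY]
  have hYX : Y = X⁻¹ := by rw [hY, hX, zpow_neg]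
  rw [hYX]
  rw [mul_comm 2 M, mul_assoc, ← mul_comm (‖a‖) 2, mul_comm M (2 * X⁻¹)]
  have : ‖a‖ ≤ M * X⁻¹ := by
    rw [← le_div_iff₀ hXpos] at haX
    rwa [div_eq_mul_inv] at haX
  calc ‖a‖ * 2 ≤ (M * X⁻¹) * 2 := by nlinarith
    _ = 2 * X⁻¹ * M := by ring

lemma fcoef_one_eq (h : ℂ → ℝ) (k : ℤ) :
    (∫ θ in (0:ℝ)..1, ((h (Complex.exp (2 * Real.pi * Complex.I * (θ : ℂ))) : ℝ) : ℂ)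
        * Complex.exp (-2 * Real.pi * Complex.I * (k : ℂ) * (θ : ℂ)))
    = fcoef h k 1 := by
  apply intervalIntegral.integral_congr
  intro θ _
  have : γmap 1 θ = Complex.exp (2 * Real.pi * Complex.I * (θ:ℂ)) := by
    rw [γmap, emap]
    push_cast
    ring
  show _ * _ = _ * _
  rw [this]

lemma fcoef_neg (h : ℂ → ℝ) (k : ℤ) :
    fcoef h (-k) 1 = (starRingEnd ℂ) (fcoef h k 1) := by
  rw [fcoef, fcoef, ← intervalIntegral_conj]
  apply intervalIntegral.integral_congr
  intro θ _
  show _ * _ = (starRingEnd ℂ) (_ * _)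
  rw [map_mul]
  congr 1
  · rw [Complex.conj_ofReal]
  · rw [← Complex.exp_conj]
    congr 1
    simp only [map_mul, Complex.conj_I, Complex.conj_ofReal, map_intCast, map_ofNat, map_neg]
    push_cast
    ring


end AuxFourierDecay

/-- Fourier decay of a harmonic function on the annulus with
reflection symmetry, in terms of its sup on the outer circle. -/
theorem fourier_decay_of_harmonic_part
    (R₁ : ℝ) (hR : 1 < R₁) (h : ℂ → ℝ)
    (hcont : ContinuousOn h (closedAnnulus R₁))
    (hharm : HarmonicOnSet h (annulus R₁))
    (hsym : ∀ z ∈ closedAnnulus R₁, h z = h ((starRingEnd ℂ) z)⁻¹)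
    (k : ℤ) (hk : k ≠ 0) :
    ‖∫ θ in (0:ℝ)..1,
        ((h (Complex.exp (2 * Real.pi * Complex.I * (θ : ℂ))) : ℝ) : ℂ)
          * Complex.exp (-2 * Real.pi * Complex.I * (k : ℂ) * (θ : ℂ))‖
      ≤ 2 * sSup ((fun z : ℂ => |h z|) '' {z : ℂ | ‖z‖ = R₁})
          * R₁ ^ (-(k.natAbs : ℤ)) := by
  rw [fcoef_one_eq h k]
  rcases le_or_gt 1 k with hpos | hneg
  · exact core R₁ hR h hcont hharm hsym k hpos
  · have hk' : 1 ≤ -k := by omega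
    have hcore := core R₁ hR h hcont hharm hsym (-k) hk'
    rw [Int.natAbs_neg] at hcore
    rw [show ‖fcoef h k 1‖ = ‖fcoef h (-k) 1‖ by
      rw [fcoef_neg h k, Complex.norm_conj]]
    exact hcore


end
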